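/- arXiv:1604.03161 — 3 statements merged into one kernel-verified Lean document; each statement's English description precedes it below -/
import Mathlib

section
/- Let m ≥ 1 and let L ⊂ ℝ^d have distinct distances and no infinite descending chains. Then there exists a unique stable m-matching of L; moreover, in this stable m-matching at most m points of L have strictly fewer than m partners. -/
noncomputable section

/-- Points of `ℝ^d` with the Euclidean norm. -/
abbrev Pt (d : ℕ) := EuclideanSpace ℝ (Fin d)

/-- `L` has all pairwise distances distinct: the distance determines the unordered pair. -/
def DistinctDist {d : ℕ} (L : Set (Pt d)) : Prop :=
  ∀ x ∈ L, ∀ y ∈ L, ∀ z ∈ L, ∀ w ∈ L,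
    x ≠ y → z ≠ w → dist x y = dist z w → (x = z ∧ y = w) ∨ (x = w ∧ y = z)

/-- `L` has no infinite descending chains: no sequence of points of `L` whose consecutive
distances are strictly decreasing. -/
def NoDescChain {d : ℕ} (L : Set (Pt d)) : Prop :=
  ¬ ∃ c : ℕ → Pt d, (∀ n, c n ∈ L) ∧ StrictAnti (fun n => dist (c n) (c (n + 1)))

/-- `R` encodes an `m`-matching of `L` (as the symmetric relation "matched to"): a set of
unordered pairs of distinct points of `L` in which each point lies in at most `m` pairs. -/
def IsMMatching {d : ℕ} (m : ℕ) (L : Set (Pt d)) (R : Pt d → Pt d → Prop) : Prop :=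
  (∀ x y, R x y → R y x) ∧
  (∀ x y, R x y → x ∈ L ∧ y ∈ L ∧ x ≠ y) ∧
  (∀ x : Pt d, {y | R x y}.Finite ∧ {y | R x y}.ncard ≤ m)

/-- `D(x) > r` for the `m`-matching `R`, where `D(x)` is the distance from `x` to its most
distant partner, and `D(x) = ∞` if `x` has strictly fewer than `m` partners. -/
def DGt {d : ℕ} (m : ℕ) (R : Pt d → Pt d → Prop) (x : Pt d) (r : ℝ) : Prop :=
  {y | R x y}.ncard < m ∨ ∃ z, R x z ∧ r < dist x z

/-- `|x − y| ≤ D(x)` for the `m`-matching `R`: `x` desires `y`. -/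
def Desires {d : ℕ} (m : ℕ) (R : Pt d → Pt d → Prop) (x y : Pt d) : Prop :=
  {z | R x z}.ncard < m ∨ ∃ z, R x z ∧ dist x y ≤ dist x z

/-- The `m`-matching `R` of `L` is stable: there are no distinct `x, y ∈ L`, not matched to
each other, with `D(x) > |x − y|` and `D(y) > |x − y|`. -/
def IsMStable {d : ℕ} (m : ℕ) (L : Set (Pt d)) (R : Pt d → Pt d → Prop) : Prop :=
  ¬ ∃ x ∈ L, ∃ y ∈ L, x ≠ y ∧ ¬ R x y ∧ DGt m R x (dist x y) ∧ DGt m R y (dist x y)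

lemma boundedFinite {d : ℕ} {L : Set (Pt d)} (hchain : NoDescChain L) (x : Pt d) (r : ℝ) :
    {y | y ∈ L ∧ dist x y ≤ r}.Finite := by
  by_contra hfin
  have hinf : {y | y ∈ L ∧ dist x y ≤ r}.Infinite := hfin
  set S := {y | y ∈ L ∧ dist x y ≤ r} with hS
  -- an injective sequence in S
  let u : ℕ ↪ S := Set.Infinite.natEmbedding _ hinf
  have hw : ∀ n : ℕ, (u n : Pt d) ∈ Metric.closedBall x r := by
    intro n
    rcases (u n).2 with ⟨-, h2⟩
    simpa [Metric.mem_closedBall, dist_comm] using h2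
  obtain ⟨a, -, φ, hφ, hconv⟩ :=
    (isCompact_closedBall x r).tendsto_subseq hw
  set v : ℕ → Pt d := fun n => (u (φ n) : Pt d) with hv
  have hvinj : Function.Injective v := by
    intro i j hij
    exact hφ.injective (u.injective (Subtype.ext hij))
  have hvS : ∀ n, v n ∈ S := fun n => (u (φ n)).2
  have hconv' : Filter.Tendsto v Filter.atTop (nhds a) := hconv
  -- selection: for every ε > 0 there is a point of S within ε of a, distinct from a
  have hsel : ∀ ε : ℝ, 0 < ε → ∃ y : Pt d, y ∈ S ∧ y ≠ a ∧ dist y a < ε := by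
    intro ε hε
    obtain ⟨N, hN⟩ := (Metric.tendsto_atTop.mp hconv') ε hε
    by_cases h : v N = a
    · refine ⟨v (N + 1), hvS _, ?_, hN _ (by omega)⟩
      intro hc; exact (by omega : N + 1 ≠ N) (hvinj (hc.trans h.symm))
    · exact ⟨v N, hvS _, h, hN _ le_rfl⟩
  have hstep : ∀ y : Pt d, y ≠ a → ∃ z : Pt d, z ∈ S ∧ z ≠ a ∧ dist z a < dist y a / 4 := by
    intro y hy
    exact hsel _ (by have := dist_pos.mpr hy; linarith)
  choose nxt hnxtS hnxta hnxtlt using hstep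
  obtain ⟨y₀, hy₀S, hy₀a, -⟩ := hsel 1 one_pos
  let f : ℕ → {y : Pt d // y ∈ S ∧ y ≠ a} := fun n =>
    Nat.rec ⟨y₀, hy₀S, hy₀a⟩ (fun _ p => ⟨nxt p.1 p.2.2, hnxtS _ _, hnxta _ _⟩) n
  set c : ℕ → Pt d := fun n => (f n).1 with hc
  have hfl : ∀ n, dist (c (n+1)) a < dist (c n) a / 4 := by
    intro n
    exact hnxtlt _ (f n).2.2
  have hpos : ∀ n, 0 < dist (c n) a := fun n => dist_pos.mpr (f n).2.2
  have hcL : ∀ n, c n ∈ L := fun n => (f n).2.1.1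
  have hkey : ∀ n, dist (c (n+1)) (c (n+2)) < dist (c n) (c (n+1)) := by
    intro n
    have h1 := hfl n
    have h2 := hfl (n + 1)
    have p0 := hpos n
    have p1 := hpos (n+1)
    have p2 := hpos (n+2)
    have hub : dist (c (n+1)) (c (n+2)) ≤ dist (c (n+1)) a + dist (c (n+2)) a := by
      calc dist (c (n+1)) (c (n+2)) ≤ dist (c (n+1)) a + dist a (c (n+2)) := dist_triangle _ _ _
        _ = dist (c (n+1)) a + dist (c (n+2)) a := by rw [dist_comm a]
    have hlb : dist (c n) a - dist (c (n+1)) a ≤ dist (c n) (c (n+1)) := by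
      have := dist_triangle (c n) (c (n+1)) a
      linarith
    linarith
  exact hchain ⟨c, hcL, strictAnti_nat_of_succ_lt (fun n => hkey n)⟩

def PRel {d : ℕ} (L : Set (Pt d)) : (Pt d × Pt d) → (Pt d × Pt d) → Prop := fun p q =>
  p.1 ∈ L ∧ p.2 ∈ L ∧ q.1 ∈ L ∧ q.2 ∈ L ∧
  (p.1 = q.1 ∨ p.1 = q.2 ∨ p.2 = q.1 ∨ p.2 = q.2) ∧ dist p.1 p.2 < dist q.1 q.2

lemma prel_wf {d : ℕ} {L : Set (Pt d)} (hchain : NoDescChain L) : WellFounded (PRel L) := by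
  classical
  by_contra hwf
  -- extract an infinite descending sequence of pairs
  obtain ⟨f, hf⟩ : ∃ f : ℕ → Pt d × Pt d, ∀ n, PRel L (f (n+1)) (f n) := by
    have hex : ∃ a, ¬ Acc (PRel L) a := by
      by_contra h
      push_neg at h
      exact hwf ⟨h⟩
    have hstep : ∀ a : Pt d × Pt d, ¬ Acc (PRel L) a →
        ∃ b, ¬ Acc (PRel L) b ∧ PRel L b a := by
      intro a ha
      by_contra h
      push_neg at h
      exact ha (Acc.intro a fun b hb => not_not.mp (h b · hb))
    choose g hg1 hg2 using hstep
    obtain ⟨a₀, ha₀⟩ := hex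
    refine ⟨fun n => (Nat.rec (motive := fun _ => {p : Pt d × Pt d // ¬ Acc (PRel L) p})
      ⟨a₀, ha₀⟩ (fun _ p => ⟨g p.1 p.2, hg1 _ _⟩) n : _).1, fun n => ?_⟩
    exact hg2 _ _
  set D : ℕ → ℝ := fun n => dist (f n).1 (f n).2 with hD
  have hDlt : ∀ n, D (n+1) < D n := fun n => (hf n).2.2.2.2.2
  have hDanti : StrictAnti D := strictAnti_nat_of_succ_lt hDlt
  have hmem : ∀ n, (f n).1 ∈ L ∧ (f n).2 ∈ L := fun n => ⟨(hf n).2.2.1, (hf n).2.2.2.1⟩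
  have hDpos : ∀ n, 0 < D n := fun n => lt_of_le_of_lt dist_nonneg (hDlt n)
  have hne' : ∀ n, (f n).1 ≠ (f n).2 := fun n => dist_pos.mp (hDpos n)
  -- shared point
  set s : ℕ → Pt d := fun n =>
    if (f (n+1)).1 = (f n).1 ∨ (f (n+1)).1 = (f n).2 then (f (n+1)).1 else (f (n+1)).2 with hs
  have hs1 : ∀ n, s n = (f (n+1)).1 ∨ s n = (f (n+1)).2 := by
    intro n
    by_cases h : (f (n+1)).1 = (f n).1 ∨ (f (n+1)).1 = (f n).2 <;> simp [hs, h]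
  have hs2 : ∀ n, s n = (f n).1 ∨ s n = (f n).2 := by
    intro n
    by_cases h : (f (n+1)).1 = (f n).1 ∨ (f (n+1)).1 = (f n).2
    · simpa [hs, h] using h
    · have hsh := (hf n).2.2.2.2.1
      simp only [hs, h, if_false]
      tauto
  have hsL : ∀ n, s n ∈ L := by
    intro n
    rcases hs2 n with h | h <;> rw [h]
    exacts [(hmem n).1, (hmem n).2]
  -- two distinct members of the pair f n are at distance D n
  have hpairdist : ∀ n (a b : Pt d), (a = (f n).1 ∨ a = (f n).2) → (b = (f n).1 ∨ b = (f n).2) →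
      a ≠ b → dist a b = D n := by
    intro n a b ha hb hab
    rcases ha with ha | ha <;> rcases hb with hb | hb <;> subst ha <;> subst hb
    · exact absurd rfl hab
    · rfl
    · exact dist_comm _ _
    · exact absurd rfl hab
  by_cases hA : ∃ x, {n | s n = x}.Infinite
  · -- star case
    obtain ⟨x, hx⟩ := hA
    set t : ℕ → Pt d := fun n => if (f (n+1)).1 = x then (f (n+1)).2 else (f (n+1)).1 with ht
    have htmem : ∀ n ∈ {n | s n = x}, (t n = (f (n+1)).1 ∨ t n = (f (n+1)).2) ∧ t n ≠ x := by
      intro n hn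
      by_cases h : (f (n+1)).1 = x
      · refine ⟨Or.inr (by simp [ht, h]), ?_⟩
        simp only [ht, h, if_true]
        intro hc
        exact hne' (n+1) (h.trans hc.symm)
      · exact ⟨Or.inl (by simp [ht, h]), by simp [ht, h]⟩
    have hxmem : ∀ n ∈ {n | s n = x}, x = (f (n+1)).1 ∨ x = (f (n+1)).2 := by
      intro n hn
      have h1 := hs1 n
      rw [hn] at h1
      tauto
    have htd : ∀ n ∈ {n | s n = x}, dist x (t n) = D (n+1) := by
      intro n hn
      exact hpairdist (n+1) x (t n) (hxmem n hn) (htmem n hn).1 (Ne.symm (htmem n hn).2)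
    have htinj : Set.InjOn t {n | s n = x} := by
      intro i hi j hj hij
      by_contra hij'
      have hDij : D (i+1) = D (j+1) := by rw [← htd i hi, ← htd j hj, hij]
      have := hDanti.injective hDij
      omega
    have htL : ∀ n ∈ {n | s n = x}, t n ∈ {y | y ∈ L ∧ dist x y ≤ D 0} := by
      intro n hn
      refine ⟨?_, ?_⟩
      · rcases htmem n hn with ⟨h | h, -⟩ <;> rw [h]
        exacts [(hmem (n+1)).1, (hmem (n+1)).2]
      · rw [htd n hn]
        exact le_of_lt (hDanti (Nat.succ_pos n))
    have : (t '' {n | s n = x}).Infinite := hx.image htinj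
    exact this ((boundedFinite hchain x (D 0)).subset (by
      rintro y ⟨n, hn, rfl⟩; exact htL n hn))
  · -- no star: collapse to a chain
    push_neg at hA
    have hnext : ∀ n, ∃ k, n < k ∧ s k ≠ s n := by
      intro n
      by_contra h
      push_neg at h
      have : {k | s k = s n}.Infinite := by
        apply Set.Infinite.mono (s := Set.Ioi n)
        · intro k hk; exact h k hk
        · exact Set.Ioi_infinite n
      exact this (hA (s n))
    obtain ⟨u, humono, hschange, hsconst⟩ : ∃ u : ℕ → ℕ, (∀ k, u k < u (k+1)) ∧
        (∀ k, s (u (k+1)) ≠ s (u k)) ∧ (∀ k j, u k ≤ j → j < u (k+1) → s j = s (u k)) := by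
      refine ⟨fun k => Nat.rec 0 (fun _ uk => Nat.find (hnext uk)) k,
        fun k => (Nat.find_spec (hnext _)).1, fun k => (Nat.find_spec (hnext _)).2, ?_⟩
      intro k j h1 h2
      rcases eq_or_lt_of_le h1 with h | h
      · rw [← h]
      · have h3 := Nat.find_min (hnext _) h2
        push_neg at h3
        exact h3 h
    set c : ℕ → Pt d := fun k => s (u k) with hc
    have hkey : ∀ k, dist (c k) (c (k+1)) = D (u (k+1)) := by
      intro k
      have h1 : u k ≤ u (k+1) - 1 := by have := humono k; omega
      have h2 : u (k+1) - 1 < u (k+1) := by have := humono k; omega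
      have h3 : s (u (k+1) - 1) = s (u k) := hsconst k _ h1 h2
      have h4 : (u (k+1) - 1) + 1 = u (k+1) := by have := humono k; omega
      have h5 : s (u (k+1) - 1) = (f (u (k+1))).1 ∨ s (u (k+1) - 1) = (f (u (k+1))).2 := by
        have h6 := hs1 (u (k+1) - 1); rwa [h4] at h6
      show dist (s (u k)) (s (u (k+1))) = D (u (k+1))
      rw [← h3]
      exact hpairdist (u (k+1)) _ _ h5 (hs2 (u (k+1)))
        (by rw [h3]; exact fun hc' => hschange k hc'.symm)
    have hanti : StrictAnti (fun k => dist (c k) (c (k+1))) := by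
      apply strictAnti_nat_of_succ_lt
      intro k
      rw [hkey, hkey]
      exact hDanti (humono (k+1))
    exact hchain ⟨c, fun k => hsL (u k), hanti⟩

/-- The canonical stable matching, by well-founded recursion on pairs. -/
def QF {d : ℕ} (m : ℕ) {L : Set (Pt d)} (hwf : WellFounded (PRel L)) : Pt d × Pt d → Prop :=
  hwf.fix (fun p rec => p.1 ∈ L ∧ p.2 ∈ L ∧ p.1 ≠ p.2 ∧
    {z | ∃ h : PRel L (p.1, z) p, rec (p.1, z) h}.ncard < m ∧
    {z | ∃ h : PRel L (p.2, z) p, rec (p.2, z) h}.ncard < m)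

lemma QF_eq {d : ℕ} (m : ℕ) {L : Set (Pt d)} (hwf : WellFounded (PRel L)) (p : Pt d × Pt d) :
    QF m hwf p = (p.1 ∈ L ∧ p.2 ∈ L ∧ p.1 ≠ p.2 ∧
      {z | ∃ _ : PRel L (p.1, z) p, QF m hwf (p.1, z)}.ncard < m ∧
      {z | ∃ _ : PRel L (p.2, z) p, QF m hwf (p.2, z)}.ncard < m) := by
  unfold QF
  exact hwf.fix_eq _ p

lemma QF_iff {d : ℕ} (m : ℕ) {L : Set (Pt d)} (hwf : WellFounded (PRel L)) (x y : Pt d) :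
    QF m hwf (x, y) ↔ x ∈ L ∧ y ∈ L ∧ x ≠ y ∧
      {z | z ∈ L ∧ dist x z < dist x y ∧ QF m hwf (x, z)}.ncard < m ∧
      {z | z ∈ L ∧ dist y z < dist x y ∧ QF m hwf (y, z)}.ncard < m := by
  rw [QF_eq]
  have key : ∀ (hx : x ∈ L) (hy : y ∈ L),
      ({z | ∃ _ : PRel L (x, z) (x, y), QF m hwf (x, z)} =
        {z | z ∈ L ∧ dist x z < dist x y ∧ QF m hwf (x, z)}) ∧
      ({z | ∃ _ : PRel L (y, z) (x, y), QF m hwf (y, z)} =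
        {z | z ∈ L ∧ dist y z < dist x y ∧ QF m hwf (y, z)}) := by
    intro hx hy
    constructor <;> ext z <;> simp [PRel, hx, hy, exists_prop, and_assoc]
  constructor
  · rintro ⟨hx, hy, hne, h1, h2⟩
    exact ⟨hx, hy, hne, by rw [← (key hx hy).1]; exact h1, by rw [← (key hx hy).2]; exact h2⟩
  · rintro ⟨hx, hy, hne, h1, h2⟩
    exact ⟨hx, hy, hne, by rw [(key hx hy).1]; exact h1, by rw [(key hx hy).2]; exact h2⟩

lemma QF_symm {d : ℕ} (m : ℕ) {L : Set (Pt d)} (hwf : WellFounded (PRel L)) (x y : Pt d) :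
    QF m hwf (x, y) → QF m hwf (y, x) := by
  rw [QF_iff, QF_iff]
  rintro ⟨hx, hy, hne, h1, h2⟩
  refine ⟨hy, hx, hne.symm, ?_, ?_⟩ <;> rw [dist_comm y x] <;> assumption

section Main

variable {d : ℕ} {m : ℕ} {L : Set (Pt d)}

lemma dd_from_point (hdist : DistinctDist L) {x y z : Pt d}
    (hx : x ∈ L) (hy : y ∈ L) (hz : z ∈ L) (hxy : x ≠ y) (hxz : x ≠ z)
    (h : dist x y = dist x z) : y = z := by
  rcases hdist x hx y hy x hx z hz hxy hxz h with ⟨-, h2⟩ | ⟨h1, h2⟩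
  · exact h2
  · exact absurd h2.symm hxy

/-- Partner sets of `QF` are finite with at most `m` elements. -/
lemma QF_partners (hdist : DistinctDist L) (hchain : NoDescChain L)
    (hwf : WellFounded (PRel L)) (x : Pt d) :
    {y | QF m hwf (x, y)}.Finite ∧ {y | QF m hwf (x, y)}.ncard ≤ m := by
  classical
  set P := {y | QF m hwf (x, y)} with hP
  have hsub : ∀ T : Finset (Pt d), ↑T ⊆ P → T.card ≤ m := by
    intro T hT
    by_contra hTc
    push_neg at hTc
    have hTne : T.Nonempty := Finset.card_pos.mp (by omega)
    obtain ⟨y, hyT, hymax⟩ := T.exists_max_image (fun z => dist x z) hTne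
    have hxy : QF m hwf (x, y) := hT hyT
    rw [QF_iff] at hxy
    obtain ⟨hxL, hyL, hne, h1, -⟩ := hxy
    -- the other elements of T are closer partners
    have herase : ↑(T.erase y) ⊆ {z | z ∈ L ∧ dist x z < dist x y ∧ QF m hwf (x, z)} := by
      intro z hz
      rw [Finset.coe_erase] at hz
      obtain ⟨hzT, hzy⟩ := hz
      have hq : QF m hwf (x, z) := hT hzT
      have hzL : z ∈ L := ((QF_iff m hwf x z).mp hq).2.1
      have hxz : x ≠ z := ((QF_iff m hwf x z).mp hq).2.2.1
      refine ⟨hzL, lt_of_le_of_ne (hymax z hzT) ?_, hq⟩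
      intro hd
      exact hzy (dd_from_point hdist hxL hzL hyL hxz hne hd)
    have hfin : {z | z ∈ L ∧ dist x z < dist x y ∧ QF m hwf (x, z)}.Finite :=
      (boundedFinite hchain x (dist x y)).subset (fun z hz => ⟨hz.1, le_of_lt hz.2.1⟩)
    have hcard : m ≤ {z | z ∈ L ∧ dist x z < dist x y ∧ QF m hwf (x, z)}.ncard := by
      calc m ≤ (T.erase y).card := by rw [Finset.card_erase_of_mem hyT]; omega
        _ = (↑(T.erase y) : Set (Pt d)).ncard := (Set.ncard_coe_finset _).symm
        _ ≤ _ := Set.ncard_le_ncard herase hfin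
    omega
  have hfin : P.Finite := by
    by_contra hinf
    obtain ⟨T, hT, hTcard⟩ := (show P.Infinite from hinf).exists_subset_card_eq (m + 1)
    have := hsub T hT
    omega
  refine ⟨hfin, ?_⟩
  by_contra hcard
  push_neg at hcard
  have hcard' : m + 1 ≤ hfin.toFinset.card := by
    rwa [Set.ncard_eq_toFinset_card _ hfin] at hcard
  obtain ⟨T, hT, hTcard⟩ := Finset.exists_subset_card_eq hcard'
  have := hsub T (by intro z hz; simpa using hT hz)
  omega

end Main

section Main2

variable {d : ℕ} {m : ℕ} {L : Set (Pt d)}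

lemma QF_matching (hdist : DistinctDist L) (hchain : NoDescChain L)
    (hwf : WellFounded (PRel L)) :
    IsMMatching m L (fun x y => QF m hwf (x, y)) := by
  refine ⟨fun x y h => QF_symm m hwf x y h, fun x y h => ?_, fun x => QF_partners hdist hchain hwf x⟩
  have h' : QF m hwf (x, y) := h
  rw [QF_iff] at h'
  exact ⟨h'.1, h'.2.1, h'.2.2.1⟩

/-- If `x` desires beyond `dist x y`, then `x` has fewer than `m` `QF`-partners closer
than `y`. -/
lemma QF_helper (hdist : DistinctDist L) (hchain : NoDescChain L)
    (hwf : WellFounded (PRel L)) {x y : Pt d}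
    (hDx : DGt m (fun x y => QF m hwf (x, y)) x (dist x y)) :
    {z | z ∈ L ∧ dist x z < dist x y ∧ QF m hwf (x, z)}.ncard < m := by
  have hsub : {z | z ∈ L ∧ dist x z < dist x y ∧ QF m hwf (x, z)} ⊆ {z | QF m hwf (x, z)} :=
    fun z hz => hz.2.2
  obtain ⟨hPfin, hPcard⟩ := QF_partners (m := m) hdist hchain hwf x
  by_contra hc
  push_neg at hc
  have hSP : {z | z ∈ L ∧ dist x z < dist x y ∧ QF m hwf (x, z)} = {z | QF m hwf (x, z)} :=
    Set.eq_of_subset_of_ncard_le hsub (le_trans hPcard hc) hPfin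
  rcases hDx with h | ⟨z, hz1, hz2⟩
  · have h' : {z | QF m hwf (x, z)}.ncard < m := h
    have hc' : m ≤ {z | QF m hwf (x, z)}.ncard := by rw [← hSP]; exact hc
    omega
  · have hzmem : z ∈ {z | QF m hwf (x, z)} := hz1
    rw [← hSP] at hzmem
    have := hzmem.2.1
    linarith
  
lemma QF_stable (hdist : DistinctDist L) (hchain : NoDescChain L)
    (hwf : WellFounded (PRel L)) :
    IsMStable m L (fun x y => QF m hwf (x, y)) := by
  rintro ⟨x, hx, y, hy, hne, hnR, hDx, hDy⟩
  apply hnR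
  rw [QF_iff]
  refine ⟨hx, hy, hne, QF_helper hdist hchain hwf hDx, ?_⟩
  have h2 := QF_helper hdist hchain hwf (x := y) (y := x) (by rwa [dist_comm y x])
  rwa [dist_comm y x] at h2

/-- Any stable m-matching satisfies the local characterization. -/
lemma stable_char (hm : 1 ≤ m) (hdist : DistinctDist L) {R : Pt d → Pt d → Prop}
    (hR : IsMMatching m L R) (hst : IsMStable m L R) (x y : Pt d) :
    R x y ↔ x ∈ L ∧ y ∈ L ∧ x ≠ y ∧
      {z | z ∈ L ∧ dist x z < dist x y ∧ R x z}.ncard < m ∧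
      {z | z ∈ L ∧ dist y z < dist x y ∧ R y z}.ncard < m := by
  obtain ⟨hsym, hmem, hfin⟩ := hR
  constructor
  · intro hxy
    obtain ⟨hx, hy, hne⟩ := hmem x y hxy
    refine ⟨hx, hy, hne, ?_, ?_⟩
    · have hsub : {z | z ∈ L ∧ dist x z < dist x y ∧ R x z} ⊆ {z | R x z} \ {y} := by
        rintro z ⟨-, hlt, hz⟩
        exact ⟨hz, fun hzy => by rw [Set.mem_singleton_iff] at hzy; subst hzy; exact lt_irrefl _ hlt⟩
      have := Set.ncard_le_ncard hsub (((hfin x).1).diff)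
      rw [Set.ncard_diff_singleton_of_mem (show y ∈ {z | R x z} from hxy)] at this
      have := (hfin x).2
      omega
    · have hsub : {z | z ∈ L ∧ dist y z < dist x y ∧ R y z} ⊆ {z | R y z} \ {x} := by
        rintro z ⟨-, hlt, hz⟩
        refine ⟨hz, fun hzx => ?_⟩
        rw [Set.mem_singleton_iff] at hzx; subst hzx
        rw [dist_comm y z] at hlt
        exact lt_irrefl _ hlt
      have hyx : R y x := hsym x y hxy
      have := Set.ncard_le_ncard hsub (((hfin y).1).diff)
      rw [Set.ncard_diff_singleton_of_mem (show x ∈ {z | R y z} from hyx)] at this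
      have := (hfin y).2
      omega
  · rintro ⟨hx, hy, hne, h1, h2⟩
    by_contra hnR
    have hDx : DGt m R x (dist x y) := by
      rcases lt_or_ge {z | R x z}.ncard m with h | h
      · exact Or.inl h
      · right
        have hsub : {z | z ∈ L ∧ dist x z < dist x y ∧ R x z} ⊆ {z | R x z} :=
          fun z hz => hz.2.2
        have hssub : {z | z ∈ L ∧ dist x z < dist x y ∧ R x z} ≠ {z | R x z} := by
          intro hq; rw [hq] at h1; omega
        obtain ⟨z, hzP, hzS⟩ := Set.exists_of_ssubset ⟨hsub, fun hq => hssub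
          (Set.Subset.antisymm hsub hq)⟩
        have hzL : z ∈ L := (hmem x z hzP).2.1
        have hxz : x ≠ z := (hmem x z hzP).2.2
        refine ⟨z, hzP, ?_⟩
        have : ¬ dist x z < dist x y := fun hlt => hzS ⟨hzL, hlt, hzP⟩
        rcases lt_or_eq_of_le (not_lt.mp this) with h' | h'
        · exact h'
        · exfalso
          have hyz' : y = z := dd_from_point hdist hx hy hzL hne hxz h'
          rw [← hyz'] at hzP
          exact hnR hzP
    have hDy : DGt m R y (dist x y) := by
      rcases lt_or_ge {z | R y z}.ncard m with h | h
      · exact Or.inl h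
      · right
        have hsub : {z | z ∈ L ∧ dist y z < dist x y ∧ R y z} ⊆ {z | R y z} :=
          fun z hz => hz.2.2
        have hssub : {z | z ∈ L ∧ dist y z < dist x y ∧ R y z} ≠ {z | R y z} := by
          intro hq; rw [hq] at h2; omega
        obtain ⟨z, hzP, hzS⟩ := Set.exists_of_ssubset ⟨hsub, fun hq => hssub
          (Set.Subset.antisymm hsub hq)⟩
        have hzL : z ∈ L := (hmem y z hzP).2.1
        have hyz : y ≠ z := (hmem y z hzP).2.2
        refine ⟨z, hzP, ?_⟩
        have hnlt : ¬ dist y z < dist x y := fun hlt => hzS ⟨hzL, hlt, hzP⟩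
        rcases lt_or_eq_of_le (not_lt.mp hnlt) with h' | h'
        · exact h'
        · -- dist x y = dist y z, so z = x, contradicting ¬ R x y
          exfalso
          rcases hdist y hy z hzL x hx y hy hyz hne
              h'.symm with ⟨h1', -⟩ | ⟨-, h2'⟩
          · exact hne h1'.symm
          · rw [h2'] at hzP
            exact hnR (hsym y x hzP)
    exact hst ⟨x, hx, y, hy, hne, hnR, hDx, hDy⟩

end Main2

section Main3

variable {d : ℕ} {m : ℕ} {L : Set (Pt d)}

lemma stable_unique (hm : 1 ≤ m) (hdist : DistinctDist L)
    (hwf : WellFounded (PRel L)) {R : Pt d → Pt d → Prop}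
    (hR : IsMMatching m L R) (hst : IsMStable m L R) (p : Pt d × Pt d) :
    R p.1 p.2 ↔ QF m hwf p := by
  induction p using hwf.induction with
  | _ p IH =>
    by_cases hL : p.1 ∈ L ∧ p.2 ∈ L
    · obtain ⟨hx, hy⟩ := hL
      have e1 : {z | z ∈ L ∧ dist p.1 z < dist p.1 p.2 ∧ R p.1 z} =
          {z | z ∈ L ∧ dist p.1 z < dist p.1 p.2 ∧ QF m hwf (p.1, z)} := by
        ext z
        simp only [Set.mem_setOf_eq, and_congr_right_iff]
        intro hz hlt
        exact IH (p.1, z) ⟨hx, hz, hx, hy, Or.inl rfl, hlt⟩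
      have e2 : {z | z ∈ L ∧ dist p.2 z < dist p.1 p.2 ∧ R p.2 z} =
          {z | z ∈ L ∧ dist p.2 z < dist p.1 p.2 ∧ QF m hwf (p.2, z)} := by
        ext z
        simp only [Set.mem_setOf_eq, and_congr_right_iff]
        intro hz hlt
        exact IH (p.2, z) ⟨hy, hz, hx, hy, Or.inr (Or.inl rfl), hlt⟩
      rw [stable_char hm hdist hR hst p.1 p.2, show p = (p.1, p.2) from rfl, QF_iff, e1, e2]
    · constructor
      · intro h
        obtain ⟨hx, hy, -⟩ := hR.2.1 p.1 p.2 h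
        exact absurd ⟨hx, hy⟩ hL
      · intro h
        rw [show p = (p.1, p.2) from rfl, QF_iff] at h
        exact absurd ⟨h.1, h.2.1⟩ hL

lemma deficiency (hm : 1 ≤ m) {R : Pt d → Pt d → Prop}
    (hR : IsMMatching m L R) (hst : IsMStable m L R) :
    ∃ s : Finset (Pt d), s.card ≤ m ∧
      ∀ x ∈ L, {y | R x y}.ncard < m → x ∈ s := by
  classical
  set S := {x | x ∈ L ∧ {y | R x y}.ncard < m} with hS
  have hpair : ∀ x ∈ S, ∀ y ∈ S, x ≠ y → R x y := by
    intro x hx y hy hne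
    by_contra hnR
    exact hst ⟨x, hx.1, y, hy.1, hne, hnR, Or.inl hx.2, Or.inl hy.2⟩
  rcases S.eq_empty_or_nonempty with hemp | ⟨x₀, hx₀⟩
  · refine ⟨∅, by simp, fun x hx hlt => ?_⟩
    have : x ∈ S := ⟨hx, hlt⟩
    rw [hemp] at this
    exact absurd this (Set.notMem_empty x)
  · have hsub : S ⊆ insert x₀ {y | R x₀ y} := by
      intro y hy
      by_cases h : y = x₀
      · exact h ▸ Set.mem_insert _ _
      · exact Set.mem_insert_iff.mpr (Or.inr (hpair x₀ hx₀ y hy (fun h' => h h'.symm)))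
    have hifin : (insert x₀ {y | R x₀ y}).Finite := (hR.2.2 x₀).1.insert x₀
    have hfin : S.Finite := hifin.subset hsub
    have hcard : S.ncard ≤ m := by
      have h1 := Set.ncard_le_ncard hsub hifin
      have h2 := Set.ncard_insert_le x₀ {y | R x₀ y}
      have h3 := hx₀.2
      omega
    refine ⟨hfin.toFinset, ?_, fun x hx hlt => ?_⟩
    · rwa [← Set.ncard_eq_toFinset_card _ hfin]
    · rw [Set.Finite.mem_toFinset]
      exact ⟨hx, hlt⟩


end Main3

/-- for `m ≥ 1`, a set `L` with distinct distances and no infinite descending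
chains has a unique stable `m`-matching, in which at most `m` points have strictly fewer
than `m` partners. -/
theorem exists_unique_stable_m_matching {d : ℕ} (m : ℕ) (hm : 1 ≤ m) (L : Set (Pt d))
    (hdist : DistinctDist L) (hchain : NoDescChain L) :
    (∃! R : Pt d → Pt d → Prop, IsMMatching m L R ∧ IsMStable m L R) ∧
    ∀ R : Pt d → Pt d → Prop, IsMMatching m L R → IsMStable m L R →
      ∃ s : Finset (Pt d), s.card ≤ m ∧
        ∀ x ∈ L, {y | R x y}.ncard < m → x ∈ s := by
  have hwf := prel_wf hchain
  constructor
  · refine ⟨fun x y => QF m hwf (x, y),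
      ⟨QF_matching hdist hchain hwf, QF_stable hdist hchain hwf⟩, ?_⟩
    rintro R' ⟨hM, hS⟩
    funext x y
    exact propext (stable_unique hm hdist hwf hM hS (x, y))
  · exact fun R hM hS => deficiency hm hM hS
end
end

section
/- Let k ≥ 1 and let L ⊂ ℝ^d have distinct distances and no infinite descending chains, and assume that the unique stable (k+1)-matching M of L is perfect (every point has exactly k+1 partners). In k-stone colored friendly frogs on L, a position (x, y, S) — where x is the previous player's frog, y is the frog of the player about to move, and S is the set of k points blocked by stones — is a P-position if and only if x desires y (i.e., |x − y| ≤ D(x)) and every partner z of x in M with |x − z| < |x − y| belongs to S. -/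
noncomputable section

/-- A valid position of `k`-stone colored friendly frogs on `L`: the two frogs are at
distinct points of `L` and the stones occupy a set of exactly `k` points of `L`. -/
def KStonePos {d : ℕ} (k : ℕ) (L : Set (Pt d)) (p : Pt d × Pt d × Finset (Pt d)) : Prop :=
  p.1 ∈ L ∧ p.2.1 ∈ L ∧ p.1 ≠ p.2.1 ∧ ↑p.2.2 ⊆ L ∧ p.2.2.card = k

/-- The move relation of `k`-stone colored friendly frogs on `L`.  A position is
`(x, y, S)` where `x` is the previous player's frog, `y` is the frog of the player about
to move, and `S` is the set of `k` stones placed by the previous player.  A move consists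
of choosing `z ∈ L \ (S ∪ {x, y})` with `dist z x < dist x y` together with a new set
`S' ⊆ L` of exactly `k` stones, resulting in `(z, x, S')`. -/
def KStoneMove {d : ℕ} (k : ℕ) (L : Set (Pt d))
    (p q : Pt d × Pt d × Finset (Pt d)) : Prop :=
  ∃ x y S z S', p = (x, y, S) ∧ q = (z, x, S') ∧
    x ∈ L ∧ y ∈ L ∧ x ≠ y ∧ ↑S ⊆ L ∧ S.card = k ∧
    z ∈ L ∧ z ∉ S ∧ z ≠ x ∧ z ≠ y ∧ dist z x < dist x y ∧
    ↑S' ⊆ L ∧ S'.card = k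

/-- let `k ≥ 1`, let `L` have distinct distances and no infinite descending
chains, and let `R` be its unique stable `(k+1)`-matching, assumed perfect.  Let `P` be
the P-position predicate of `k`-stone colored friendly frogs on `L` (any predicate
satisfying the defining fixpoint equation, which determines it uniquely by
well-foundedness).  Then a position `(x, y, S)` is a P-position if and only if `x`
desires `y` and every partner of `x` closer to `x` than `y` is blocked by a stone. -/
theorem kstone_ppositions {d : ℕ} (k : ℕ) (hk : 1 ≤ k) (L : Set (Pt d))
    (hdist : DistinctDist L) (hchain : NoDescChain L)
    (R : Pt d → Pt d → Prop) (hM : IsMMatching (k + 1) L R) (hS : IsMStable (k + 1) L R)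
    (hperf : ∀ x ∈ L, {y | R x y}.ncard = k + 1)
    (P : Pt d × Pt d × Finset (Pt d) → Prop)
    (hP : ∀ p, KStonePos k L p → (P p ↔ ∀ q, KStoneMove k L p q → ¬ P q)) :
    ∀ x y S, KStonePos k L (x, y, S) →
      (P (x, y, S) ↔ Desires (k + 1) R x y ∧
        ∀ z, R x z → dist x z < dist x y → z ∈ S) := by
  classical
  obtain ⟨hsym, hmemR, hfin⟩ := hM
  set Q : Pt d × Pt d × Finset (Pt d) → Prop := fun p =>
    Desires (k + 1) R p.1 p.2.1 ∧
      ∀ z, R p.1 z → dist p.1 z < dist p.1 p.2.1 → z ∈ p.2.2 with hQdef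
  have hnotlt : ∀ x ∈ L, ¬ {z | R x z}.ncard < k + 1 := by
    intro x hx
    rw [hperf x hx]; omega
  have pigeon : ∀ x ∈ L, ∀ S : Finset (Pt d), S.card = k → ∃ w, R x w ∧ w ∉ S := by
    intro x hx S hScard
    by_contra h
    push_neg at h
    have hsub : {w | R x w} ⊆ ↑S := fun w hw => h w hw
    have hle := Set.ncard_le_ncard hsub S.finite_toSet
    rw [hperf x hx, Set.ncard_coe_finset, hScard] at hle
    omega
  -- from any valid position and an unblocked partner of x closer than y, move to a Q-position
  have moveQ : ∀ x y (S : Finset (Pt d)), KStonePos k L (x, y, S) →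
      ∀ z, R x z → z ∉ S → dist x z < dist x y →
      ∃ q, KStoneMove k L (x, y, S) q ∧ Q q := by
    intro x y S hpos z hRxz hzS hzlt
    obtain ⟨hxL, hyL, hxy, hSL, hScard⟩ := hpos
    obtain ⟨_, hzL, hxz⟩ := hmemR x z hRxz
    have hRzx := hsym x z hRxz
    have hFzcard : (hfin z).1.toFinset.card = k + 1 := by
      rw [← Set.ncard_eq_toFinset_card _ (hfin z).1, hperf z hzL]
    have hxmem : x ∈ (hfin z).1.toFinset := by
      rw [Set.Finite.mem_toFinset]; exact hRzx
    refine ⟨(z, x, (hfin z).1.toFinset.erase x), ?_, ?_, ?_⟩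
    · refine ⟨x, y, S, z, _, rfl, rfl, hxL, hyL, hxy, hSL, hScard, hzL, hzS,
        Ne.symm hxz, ?_, by rw [dist_comm]; exact hzlt, ?_, ?_⟩
      · intro h; subst h; exact absurd hzlt (lt_irrefl _)
      · intro w hw
        have hw' := Finset.mem_of_mem_erase (Finset.mem_coe.mp hw)
        rw [Set.Finite.mem_toFinset] at hw'
        exact (hmemR z w hw').2.1
      · rw [Finset.card_erase_of_mem hxmem, hFzcard]
        omega
    · exact Or.inr ⟨x, hRzx, le_refl _⟩
    · intro w hRzw hwlt
      rw [Finset.mem_erase]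
      refine ⟨?_, ?_⟩
      · intro h; subst h; exact absurd hwlt (lt_irrefl _)
      · rw [Set.Finite.mem_toFinset]; exact hRzw
  -- every move from a Q-position lands on a non-Q-position
  have QnotQ : ∀ p q, Q p → KStoneMove k L p q → ¬ Q q := by
    intro p q hQp hmove
    obtain ⟨x, y, S, z, S', hpeq, hqeq, hxL, hyL, hxy, hSL, hScard, hzL, hzS, hzx,
      hzy, hzlt, hS'L, hS'card⟩ := hmove
    subst hpeq; subst hqeq
    obtain ⟨hdes, hblock⟩ := hQp
    have hxzlt : dist x z < dist x y := by rw [dist_comm]; exact hzlt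
    have hnRxz : ¬ R x z := fun h => hzS (hblock z h hxzlt)
    have hnRzx : ¬ R z x := fun h => hnRxz (hsym z x h)
    obtain ⟨w0, hRw0, hw0⟩ := hdes.resolve_left (hnotlt x hxL)
    have hDx : DGt (k + 1) R x (dist x z) :=
      Or.inr ⟨w0, hRw0, lt_of_lt_of_le hxzlt hw0⟩
    have hDz : ¬ DGt (k + 1) R z (dist x z) := by
      intro hDz
      exact hS ⟨x, hxL, z, hzL, Ne.symm hzx, hnRxz, hDx, hDz⟩
    have hall : ∀ w, R z w → dist z w < dist z x := by
      intro w hRzw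
      obtain ⟨_, hwL, hzw⟩ := hmemR z w hRzw
      have hle : dist z w ≤ dist x z := by
        by_contra h
        push_neg at h
        exact hDz (Or.inr ⟨w, hRzw, h⟩)
      rw [dist_comm x z] at hle
      rcases hle.lt_or_eq with h | h
      · exact h
      · exfalso
        rcases hdist z hzL w hwL z hzL x hxL hzw hzx h with ⟨_, hwx⟩ | ⟨hzx', _⟩
        · exact hnRzx (hwx ▸ hRzw)
        · exact hzx hzx'
    obtain ⟨w, hRzw, hwS'⟩ := pigeon z hzL S' hS'card
    rintro ⟨_, hblk⟩
    exact hwS' (hblk w hRzw (hall w hRzw))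
  -- from any valid non-Q-position there is a move to a Q-position
  have notQ_move : ∀ x y (S : Finset (Pt d)), KStonePos k L (x, y, S) → ¬ Q (x, y, S) →
      ∃ q, KStoneMove k L (x, y, S) q ∧ Q q := by
    intro x y S hpos hnQ
    obtain ⟨hxL, hyL, hxy, hSL, hScard⟩ := hpos
    by_cases hdes : Desires (k + 1) R x y
    · have hz : ∃ z, R x z ∧ dist x z < dist x y ∧ z ∉ S := by
        by_contra h
        push_neg at h
        exact hnQ ⟨hdes, fun z h1 h2 => h z h1 h2⟩
      obtain ⟨z, h1, h2, h3⟩ := hz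
      obtain ⟨q, hq1, hq2, hq3⟩ := moveQ x y S ⟨hxL, hyL, hxy, hSL, hScard⟩ z h1 h3 h2
      exact ⟨q, hq1, hq2, hq3⟩
    · have hall : ∀ z, R x z → dist x z < dist x y := by
        intro z hz
        by_contra h
        push_neg at h
        exact hdes (Or.inr ⟨z, hz, h⟩)
      obtain ⟨z, hRz, hzS⟩ := pigeon x hxL S hScard
      obtain ⟨q, hq1, hq2, hq3⟩ :=
        moveQ x y S ⟨hxL, hyL, hxy, hSL, hScard⟩ z hRz hzS (hall z hRz)
      exact ⟨q, hq1, hq2, hq3⟩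
  have movepos : ∀ p q, KStoneMove k L p q → KStonePos k L q := by
    rintro p q ⟨x, y, S, z, S', hpeq, hqeq, hxL, hyL, hxy, hSL, hScard, hzL, hzS, hzx,
      hzy, hzlt, hS'L, hS'card⟩
    subst hqeq
    exact ⟨hzL, hxL, hzx, hS'L, hS'card⟩
  -- main: on valid positions, P agrees with Q
  have main : ∀ p, KStonePos k L p → (P p ↔ Q p) := by
    intro p hp
    by_contra hbad
    have step : ∀ pp : {p // KStonePos k L p ∧ ¬ (P p ↔ Q p)},
        ∃ qq : {p // KStonePos k L p ∧ ¬ (P p ↔ Q p)}, KStoneMove k L pp.1 qq.1 := by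
      rintro ⟨p, hpos, hmis⟩
      by_cases hQp : Q p
      · have hnP : ¬ P p := fun hPp => hmis ⟨fun _ => hQp, fun _ => hPp⟩
        rw [hP p hpos] at hnP
        push_neg at hnP
        obtain ⟨q, hmv, hPq⟩ := hnP
        have hnQq := QnotQ p q hQp hmv
        exact ⟨⟨q, movepos p q hmv, fun h => hnQq (h.mp hPq)⟩, hmv⟩
      · have hPp : P p := by
          by_contra hnP
          exact hmis ⟨fun h => absurd h hnP, fun h => absurd h hQp⟩
        obtain ⟨x, y, S⟩ := p
        obtain ⟨q, hmv, hQq⟩ := notQ_move x y S hpos hQp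
        have hnPq : ¬ P q := ((hP (x, y, S) hpos).mp hPp) q hmv
        exact ⟨⟨q, movepos _ q hmv, fun h => hnPq (h.mpr hQq)⟩, hmv⟩
    choose nxt hnxt using step
    let f : ℕ → {p // KStonePos k L p ∧ ¬ (P p ↔ Q p)} :=
      fun n => Nat.rec ⟨p, hp, hbad⟩ (fun _ pp => nxt pp) n
    have hmoves : ∀ n, KStoneMove k L (f n).1 (f (n + 1)).1 := fun n => hnxt (f n)
    have hsucc : ∀ n, (f (n + 1)).1.2.1 = (f n).1.1 ∧
        dist (f (n + 1)).1.1 (f (n + 1)).1.2.1 < dist (f n).1.1 (f n).1.2.1 := by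
      intro n
      obtain ⟨x, y, S, z, S', hpeq, hqeq, _, _, _, _, _, _, _, _, _, hzlt, _, _⟩ :=
        hmoves n
      rw [hpeq, hqeq]
      exact ⟨rfl, hzlt⟩
    refine hchain ⟨fun n => (f n).1.2.1, fun n => (f n).2.1.2.1, ?_⟩
    apply strictAnti_nat_of_succ_lt
    intro n
    have h2 := (hsucc n).2
    rw [(hsucc n).1] at h2
    simp only
    rw [(hsucc n).1, (hsucc (n + 1)).1]
    calc dist ((f n).val).1 ((f (n + 1)).val).1 = dist ((f (n + 1)).val).1 ((f n).val).1 :=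
          dist_comm _ _
      _ < dist ((f n).val).1 ((f n).val).2.1 := h2
      _ = dist ((f n).val).2.1 ((f n).val).1 := dist_comm _ _
  intro x y S hpos
  exact main (x, y, S) hpos
end
end

section
/- Let L ⊂ ℝ^d have distinct distances and no infinite descending chains, let M be the unique stable matching of L, and let G be the Sprague–Grundy function of friendly frogs on L. Then for all distinct x, y ∈ L, G(x,y) = 0 if and only if {x,y} ∈ M. -/
noncomputable section

/-- `R` encodes a matching of `L` (as the symmetric relation "matched to"):
a set of unordered pairs of distinct points of `L`, each point in at most one pair. -/
def IsMatching {d : ℕ} (L : Set (Pt d)) (R : Pt d → Pt d → Prop) : Prop :=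
  (∀ x y, R x y → R y x) ∧
  (∀ x y, R x y → x ∈ L ∧ y ∈ L ∧ x ≠ y) ∧
  (∀ x y z, R x y → R x z → y = z)

/-- The matching `R` of `L` is stable: there is no pair of distinct points of `L`, not matched
to each other, each of which is unmatched or strictly farther from its partner than from
the other point. -/
def IsStable {d : ℕ} (L : Set (Pt d)) (R : Pt d → Pt d → Prop) : Prop :=
  ¬ ∃ x ∈ L, ∃ y ∈ L, x ≠ y ∧ ¬ R x y ∧
    (∀ z, R x z → dist x y < dist x z) ∧ (∀ z, R y z → dist x y < dist y z)

/-- `G` is the Sprague–Grundy function of friendly frogs on `L`: it is symmetric (being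
defined on unordered pairs), and for distinct `x, y ∈ L`, `G x y` is the minimum excluded
value (`mex`) of the set of Grundy values of the positions reachable by one legal move
from `{x, y}`, i.e. pairs `{x, z}` with `dist x z < dist x y` or `{y, z}` with
`dist y z < dist x y`, where `z ∈ L \ {x, y}`.  (By well-foundedness of the move relation
this fixpoint equation determines `G` uniquely.) -/
def IsGrundy {d : ℕ} (L : Set (Pt d)) (G : Pt d → Pt d → ℕ) : Prop :=
  (∀ x y, G x y = G y x) ∧
  ∀ x ∈ L, ∀ y ∈ L, x ≠ y →
    G x y = sInf {n : ℕ | n ∉ {m : ℕ | ∃ z ∈ L, z ≠ x ∧ z ≠ y ∧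
      ((dist x z < dist x y ∧ m = G x z) ∨ (dist y z < dist x y ∧ m = G y z))}}

/-- A single legal move in friendly frogs: `q` is reachable from `p`. -/
def FFMove {d : ℕ} (L : Set (Pt d)) (q p : Pt d × Pt d) : Prop :=
  q.1 ∈ L ∧ q.2 ∈ L ∧ q.1 ≠ q.2 ∧ dist q.1 q.2 < dist p.1 p.2 ∧
    (q.1 = p.1 ∨ q.1 = p.2 ∨ q.2 = p.1 ∨ q.2 = p.2)

/-- If `L` has no descending chain, it is locally finite. -/
lemma locFin {d : ℕ} {L : Set (Pt d)} (hchain : NoDescChain L) (x : Pt d) (r : ℝ) :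
    (L ∩ Metric.ball x r).Finite := by
  classical
  by_contra hinf
  replace hinf : (L ∩ Metric.ball x r).Infinite := hinf
  set S := L ∩ Metric.ball x r with hS
  have hbdd : Bornology.IsBounded S :=
    Metric.isBounded_ball.subset Set.inter_subset_right
  let g : ℕ ↪ S := hinf.natEmbedding S
  have hgmem : ∀ n, ((g n : S) : Pt d) ∈ S := fun n => (g n).2
  obtain ⟨a, -, φ, hφ, hconv⟩ := tendsto_subseq_of_bounded hbdd hgmem
  have hginj : Function.Injective fun n => ((g n : S) : Pt d) := by
    intro m n h
    exact g.injective (Subtype.ext h)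
  set u : ℕ → Pt d := fun n => ((g (φ n) : S) : Pt d) with hu
  have huinj : Function.Injective u := fun m n h => hφ.injective (hginj h)
  have humem : ∀ n, u n ∈ L := fun n => (hgmem (φ n)).1
  have key : ∀ ε : ℝ, 0 < ε → ∃ z, z ∈ L ∧ z ≠ a ∧ dist z a < ε := by
    intro ε hε
    obtain ⟨N, hN⟩ := Metric.tendsto_atTop.mp hconv ε hε
    by_cases h : u N = a
    · refine ⟨u (N + 1), humem _, ?_, hN (N + 1) (Nat.le_succ N)⟩
      intro h2
      exact (Nat.succ_ne_self N) (huinj (h2.trans h.symm))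
    · exact ⟨u N, humem N, h, hN N le_rfl⟩
  -- construct a descending chain accumulating at `a`
  let T := {z : Pt d // z ∈ L ∧ z ≠ a}
  obtain ⟨z0, hz0L, hz0a, -⟩ := key 1 one_pos
  have hstep : ∀ t : T, ∃ t' : T, dist (t' : Pt d) a < dist (t : Pt d) a / 4 := by
    intro t
    have hpos : 0 < dist (t : Pt d) a := dist_pos.mpr t.2.2
    obtain ⟨z, h1, h2, h3⟩ := key (dist (t : Pt d) a / 4) (by linarith)
    exact ⟨⟨z, h1, h2⟩, h3⟩
  choose st hst using hstep
  let c : ℕ → Pt d := fun n => ((st^[n] ⟨z0, hz0L, hz0a⟩ : T) : Pt d)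
  have hdec : ∀ n, dist (c (n + 1)) a < dist (c n) a / 4 := by
    intro n
    have h1 : st^[n + 1] ⟨z0, hz0L, hz0a⟩ = st (st^[n] ⟨z0, hz0L, hz0a⟩) :=
      Function.iterate_succ_apply' st n _
    show dist ((st^[n+1] ⟨z0, hz0L, hz0a⟩ : T) : Pt d) a < _
    rw [h1]
    exact hst _
  have hpos : ∀ n, 0 < dist (c n) a :=
    fun n => dist_pos.mpr (st^[n] ⟨z0, hz0L, hz0a⟩).2.2
  refine hchain ⟨c, fun n => (st^[n] ⟨z0, hz0L, hz0a⟩).2.1, ?_⟩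
  refine strictAnti_nat_of_succ_lt fun n => ?_
  have h1 := hdec n
  have h2 := hdec (n + 1)
  have hp := hpos n
  have l1 : dist (c n) a ≤ dist (c n) (c (n + 1)) + dist (c (n + 1)) a :=
    dist_triangle _ _ _
  have l2 : dist (c (n + 1)) (c (n + 2)) ≤ dist (c (n + 1)) a + dist a (c (n + 2)) :=
    dist_triangle _ _ _
  have l3 : dist a (c (n + 2)) = dist (c (n + 2)) a := dist_comm _ _
  show dist (c (n + 1)) (c (n + 2)) < dist (c n) (c (n + 1))
  linarith

/-- There is no infinite play of friendly frogs on a set without descending chains. -/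
lemma noInfPlay {d : ℕ} {L : Set (Pt d)} (hchain : NoDescChain L)
    (f : ℕ → Pt d × Pt d) (hf : ∀ n, FFMove L (f (n + 1)) (f n)) : False := by
  classical
  set D : ℕ → ℝ := fun n => dist (f n).1 (f n).2 with hD
  have hDanti : StrictAnti D := strictAnti_nat_of_succ_lt fun n => (hf n).2.2.2.1
  set w : ℕ → Pt d := fun n =>
    if (f (n + 1)).1 = (f n).1 ∨ (f (n + 1)).1 = (f n).2 then (f (n + 1)).1
    else (f (n + 1)).2 with hw
  have hw1 : ∀ n, w n = (f (n + 1)).1 ∨ w n = (f (n + 1)).2 := by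
    intro n
    by_cases h : (f (n + 1)).1 = (f n).1 ∨ (f (n + 1)).1 = (f n).2
    · left; simp only [hw, if_pos h]
    · right; simp only [hw, if_neg h]
  have hw2 : ∀ n, w n = (f n).1 ∨ w n = (f n).2 := by
    intro n
    by_cases h : (f (n + 1)).1 = (f n).1 ∨ (f (n + 1)).1 = (f n).2
    · have : w n = (f (n + 1)).1 := by simp only [hw, if_pos h]
      rw [this]; exact h
    · have hwn : w n = (f (n + 1)).2 := by simp only [hw, if_neg h]
      rcases (hf n).2.2.2.2 with h1 | h1 | h1 | h1
      · exact absurd (Or.inl h1) h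
      · exact absurd (Or.inr h1) h
      · left; rw [hwn]; exact h1
      · right; rw [hwn]; exact h1
  have hwL : ∀ n, w n ∈ L := by
    intro n
    rcases hw1 n with h | h
    · rw [h]; exact (hf n).1
    · rw [h]; exact (hf n).2.1
  by_cases hA : ∃ N, ∀ n, N ≤ n → w n = w N
  · -- one frog eventually fixed at p := w N; other points accumulate in a ball
    obtain ⟨N, hN⟩ := hA
    set p := w N with hp
    have hcomp : ∀ n, N ≤ n → ((f (n + 1)).1 = p ∨ (f (n + 1)).2 = p) := by
      intro n hn
      rcases hw1 n with h | h
      · left; rw [← h]; exact (hN n hn).symm ▸ rfl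
      · right; rw [← h]; exact (hN n hn).symm ▸ rfl
    set z : ℕ → Pt d := fun n =>
      if (f (n + 1)).1 = p then (f (n + 1)).2 else (f (n + 1)).1 with hz
    have hzprop : ∀ n, N ≤ n → dist (z n) p = D (n + 1) ∧ z n ∈ L := by
      intro n hn
      by_cases h : (f (n + 1)).1 = p
      · have hzn : z n = (f (n + 1)).2 := by simp only [hz, if_pos h]
        constructor
        · rw [hzn, ← h, dist_comm]
        · rw [hzn]; exact (hf n).2.1
      · have hzn : z n = (f (n + 1)).1 := by simp only [hz, if_neg h]
        have h2 : (f (n + 1)).2 = p := (hcomp n hn).resolve_left h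
        constructor
        · rw [hzn, ← h2]
        · rw [hzn]; exact (hf n).1
    have hinj : Function.Injective fun k => z (N + k) := by
      intro k1 k2 h
      have e1 := (hzprop (N + k1) (Nat.le_add_right _ _)).1
      have e2 := (hzprop (N + k2) (Nat.le_add_right _ _)).1
      have h' : z (N + k1) = z (N + k2) := h
      have : D (N + k1 + 1) = D (N + k2 + 1) := by
        rw [← e1, ← e2, h']
      have := hDanti.injective this
      omega
    have hmem : ∀ k, z (N + k) ∈ L ∩ Metric.ball p (D N) := by
      intro k
      obtain ⟨e1, e2⟩ := hzprop (N + k) (Nat.le_add_right _ _)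
      refine ⟨e2, ?_⟩
      rw [Metric.mem_ball, e1]
      exact hDanti (Nat.lt_succ_of_le (Nat.le_add_right _ _))
    exact (locFin hchain p (D N)).not_infinite
      (Set.infinite_of_injective_forall_mem hinj hmem)
  · -- the shared point changes infinitely often: collapse to a chain
    push_neg at hA
    have hA' : ∀ N : ℕ, ∃ n, N ≤ n ∧ w n ≠ w N := hA
    let nk : ℕ → ℕ := fun N => Nat.find (hA' N)
    have hk1 : ∀ N, N ≤ nk N ∧ w (nk N) ≠ w N := fun N => Nat.find_spec (hA' N)
    have hklt : ∀ N, N < nk N := by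
      intro N
      rcases lt_or_eq_of_le (hk1 N).1 with h | h
      · exact h
      · exfalso; apply (hk1 N).2; rw [← h]
    have hmin : ∀ N j, N ≤ j → j < nk N → w j = w N := by
      intro N j h1 h2
      by_contra h3
      exact Nat.find_min (hA' N) h2 ⟨h1, h3⟩
    set seq : ℕ → ℕ := fun k => nk^[k] 0 with hseqdef
    have hseq : ∀ k, seq (k + 1) = nk (seq k) := fun k =>
      Function.iterate_succ_apply' nk k 0
    have hseqmono : StrictMono seq := strictMono_nat_of_lt_succ (by
      intro k
      rw [hseq]
      exact hklt (seq k))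
    have key : ∀ N, dist (w N) (w (nk N)) = D (nk N) := by
      intro N
      set m := nk N with hm
      have hm0 : 0 < m := lt_of_le_of_lt (Nat.zero_le N) (hklt N)
      have e1 : w (m - 1) = w N :=
        hmin N (m - 1) (Nat.le_sub_one_of_lt (hklt N)) (Nat.sub_lt hm0 one_pos)
      have e2 : w (m - 1) = (f m).1 ∨ w (m - 1) = (f m).2 := by
        have := hw1 (m - 1)
        have hm1 : m - 1 + 1 = m := by omega
        rwa [hm1] at this
      have e3 : w m = (f m).1 ∨ w m = (f m).2 := hw2 m
      have hne : w N ≠ w m := Ne.symm (hk1 N).2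
      rw [e1] at e2
      rcases e2 with h2 | h2 <;> rcases e3 with h3 | h3
      · exact absurd (h2.trans h3.symm) hne
      · rw [h2, h3]
      · rw [h2, h3, dist_comm]
      · exact absurd (h2.trans h3.symm) hne
    refine hchain ⟨fun k => w (seq k), fun k => hwL (seq k), ?_⟩
    have hval : ∀ k, dist (w (seq k)) (w (seq (k + 1))) = D (seq (k + 1)) := by
      intro k
      rw [hseq k]
      exact key (seq k)
    refine strictAnti_nat_of_succ_lt fun k => ?_
    simp only [hval]
    exact hDanti (hseqmono (Nat.lt_succ_self (k + 1)))

/-- The key step: at a position where the claimed equivalence fails, there is a legal move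
to a position where it fails again. -/
lemma keyStep {d : ℕ} (L : Set (Pt d))
    (hdist : DistinctDist L) (hchain : NoDescChain L)
    (R : Pt d → Pt d → Prop) (hM : IsMatching L R) (hS : IsStable L R)
    (G : Pt d → Pt d → ℕ) (hG : IsGrundy L G)
    (x y : Pt d) (hx : x ∈ L) (hy : y ∈ L) (hxy : x ≠ y)
    (hbad : ¬(G x y = 0 ↔ R x y)) :
    ∃ q : Pt d × Pt d, FFMove L q (x, y) ∧ ¬(G q.1 q.2 = 0 ↔ R q.1 q.2) := by
  classical
  set V : Set ℕ := {m : ℕ | ∃ z ∈ L, z ≠ x ∧ z ≠ y ∧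
      ((dist x z < dist x y ∧ m = G x z) ∨ (dist y z < dist x y ∧ m = G y z))} with hV
  have hGeq : G x y = sInf {n : ℕ | n ∉ V} := hG.2 x hx y hy hxy
  have hVfin : V.Finite := by
    have hsub : V ⊆ (fun z => G x z) '' (L ∩ Metric.ball x (dist x y)) ∪
        (fun z => G y z) '' (L ∩ Metric.ball y (dist x y)) := by
      rintro m ⟨z, hzL, hzx, hzy, ⟨hlt, hval⟩ | ⟨hlt, hval⟩⟩
      · exact Or.inl ⟨z, ⟨hzL, by rw [Metric.mem_ball, dist_comm]; exact hlt⟩, hval.symm⟩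
      · exact Or.inr ⟨z, ⟨hzL, by rw [Metric.mem_ball, dist_comm]; exact hlt⟩, hval.symm⟩
    exact (((locFin hchain x _).image _).union ((locFin hchain y _).image _)).subset hsub
  have hcompl_ne : {n : ℕ | n ∉ V}.Nonempty := by
    have : Vᶜ.Infinite := hVfin.infinite_compl
    exact this.nonempty
  by_cases hR : R x y
  · -- then G x y ≠ 0, and some move has Grundy value 0; it leads to an unmatched pair
    have hGne : G x y ≠ 0 := fun h => hbad (iff_of_true h hR)
    have h0V : (0 : ℕ) ∈ V := by
      by_contra h0
      exact hGne (le_antisymm (hGeq ▸ Nat.sInf_le h0) (Nat.zero_le _))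
    obtain ⟨z, hzL, hzx, hzy, hcase⟩ := h0V
    rcases hcase with ⟨hlt, hval⟩ | ⟨hlt, hval⟩
    · refine ⟨(x, z), ⟨hx, hzL, hzx.symm, by simpa using hlt, Or.inl rfl⟩, ?_⟩
      intro hiff
      have hRxz : R x z := hiff.mp hval.symm
      exact hzy (hM.2.2 x y z hR hRxz).symm
    · refine ⟨(y, z), ⟨hy, hzL, hzy.symm, by simpa using hlt, Or.inr (Or.inl rfl)⟩, ?_⟩
      intro hiff
      have hRyz : R y z := hiff.mp hval.symm
      exact hzx (hM.2.2 y x z (hM.1 x y hR) hRyz).symm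
  · -- then G x y = 0, and stability provides a move to a matched pair with nonzero Grundy
    have hG0 : G x y = 0 := by
      by_contra h
      exact hbad (iff_of_false h hR)
    have h0notin : (0 : ℕ) ∉ {n : ℕ | n ∉ V} → False := fun _ => by
      exact absurd (hGeq ▸ Nat.sInf_mem hcompl_ne : G x y ∈ {n : ℕ | n ∉ V})
        (by rw [hG0]; assumption)
    have h0c : (0 : ℕ) ∈ {n : ℕ | n ∉ V} := by
      have := Nat.sInf_mem hcompl_ne
      rw [← hGeq, hG0] at this
      exact this
    have h0nV : (0 : ℕ) ∉ V := h0c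
    have hnand : ¬((∀ z, R x z → dist x y < dist x z) ∧
        (∀ z, R y z → dist x y < dist y z)) :=
      fun ⟨hA, hB⟩ => hS ⟨x, hx, y, hy, hxy, hR, hA, hB⟩
    rcases not_and_or.mp hnand with h | h
    · push_neg at h
      obtain ⟨z, hRxz, hle⟩ := h
      obtain ⟨-, hzL, hxz⟩ := hM.2.1 x z hRxz
      have hzy : z ≠ y := fun h => hR (h ▸ hRxz)
      have hne : dist x z ≠ dist x y := by
        intro heq
        rcases hdist x hx z hzL x hx y hy hxz hxy heq with ⟨-, h2⟩ | ⟨h1, -⟩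
        · exact hzy h2
        · exact hxy h1
      have hlt : dist x z < dist x y := lt_of_le_of_ne hle hne
      have hGxz : G x z ≠ 0 := by
        intro h0
        exact h0nV ⟨z, hzL, hxz.symm, hzy, Or.inl ⟨hlt, h0.symm⟩⟩
      exact ⟨(x, z), ⟨hx, hzL, hxz, by simpa using hlt, Or.inl rfl⟩,
        fun hiff => hGxz (hiff.mpr hRxz)⟩
    · push_neg at h
      obtain ⟨z, hRyz, hle⟩ := h
      obtain ⟨-, hzL, hyz⟩ := hM.2.1 y z hRyz
      have hzx : z ≠ x := fun h => hR (hM.1 y x (h ▸ hRyz))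
      have hne : dist y z ≠ dist x y := by
        intro heq
        rcases hdist y hy z hzL x hx y hy hyz hxy heq with ⟨h1, -⟩ | ⟨-, h2⟩
        · exact hxy h1.symm
        · exact hzx h2
      have hlt : dist y z < dist x y := lt_of_le_of_ne hle hne
      have hGyz : G y z ≠ 0 := by
        intro h0
        exact h0nV ⟨z, hzL, hzx, hyz.symm, Or.inr ⟨hlt, h0.symm⟩⟩
      exact ⟨(y, z), ⟨hy, hzL, hyz, by simpa using hlt, Or.inr (Or.inl rfl)⟩,
        fun hiff => hGyz (hiff.mpr hRyz)⟩

/-- let `L` have distinct distances and no infinite descending chains, let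
`R` be its unique stable matching and `G` the Sprague–Grundy function of friendly frogs
on `L`.  Then for distinct `x, y ∈ L`, `G x y = 0` if and only if `x` and `y` are matched
to each other. -/
theorem grundy_zero_iff_stable_matching {d : ℕ} (L : Set (Pt d))
    (hdist : DistinctDist L) (hchain : NoDescChain L)
    (R : Pt d → Pt d → Prop) (hM : IsMatching L R) (hS : IsStable L R)
    (G : Pt d → Pt d → ℕ) (hG : IsGrundy L G) :
    ∀ x ∈ L, ∀ y ∈ L, x ≠ y → (G x y = 0 ↔ R x y) := by
  intro x hx y hy hxy
  by_contra hbad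
  let Bad := {p : Pt d × Pt d // p.1 ∈ L ∧ p.2 ∈ L ∧ p.1 ≠ p.2 ∧
    ¬(G p.1 p.2 = 0 ↔ R p.1 p.2)}
  have step : ∀ b : Bad, ∃ b' : Bad, FFMove L b'.1 b.1 := by
    rintro ⟨⟨u, v⟩, hu, hv, huv, hb⟩
    obtain ⟨q, hq1, hq2⟩ := keyStep L hdist hchain R hM hS G hG u v hu hv huv hb
    exact ⟨⟨q, hq1.1, hq1.2.1, hq1.2.2.1, hq2⟩, hq1⟩
  choose st hst using step
  let b0 : Bad := ⟨(x, y), hx, hy, hxy, hbad⟩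
  have hf : ∀ n, FFMove L ((st^[n + 1] b0).1) ((st^[n] b0).1) := by
    intro n
    have h1 : st^[n + 1] b0 = st (st^[n] b0) := Function.iterate_succ_apply' st n b0
    rw [h1]
    exact hst (st^[n] b0)
  exact noInfPlay hchain (fun n => (st^[n] b0).1) hf
end
end
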